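/- Let p ∈ (0,1) and let X be a Bernoulli(p) random variable (X = 1 with probability p and X = 0 with probability 1-p). Then for every integer k ≥ 3, |E[(X - p)^k]| ≤ (1/2)·k!·α^(k-2)·(p(1-p))^(k/2) where α = (p(1-p))^(-1/2); that is, α = 1/√(p(1-p)) is an analytic standardized moment of the Bernoulli family at any parameter. -/

import Mathlib

open MeasureTheory ProbabilityTheory Nat

/-- α = 1/√(p(1-p)) is an analytic standardized moment of the Bernoulli(p) family:
for every k ≥ 3 the k-th central moment satisfies
|m_k| ≤ (1/2)·k!·α^(k-2)·(p(1-p))^(k/2). -/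
theorem bernoulli_analytic_standardized_moment
    (p : ℝ) (hp0 : 0 < p) (hp1 : p < 1)
    (μ : Measure ℝ)
    (hμ : μ = ((PMF.bernoulli (Real.toNNReal p)
        (by simpa using Real.toNNReal_le_one.mpr hp1.le)).map
          (fun b => if b then (1 : ℝ) else 0)).toMeasure)
    (α : ℝ) (hα : α = (p * (1 - p)) ^ (-(1/2 : ℝ)))
    (k : ℕ) (hk : 3 ≤ k) :
    |∫ x, (x - p) ^ k ∂μ| ≤
      (1/2) * (k.factorial : ℝ) * α ^ (k - 2) * (p * (1 - p)) ^ ((k : ℝ) / 2) := by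
  have hq : 0 < 1 - p := by linarith
  have hpq : 0 < p * (1 - p) := mul_pos hp0 hq
  -- compute the integral
  have hmeas : Measurable (fun b : Bool => if b then (1:ℝ) else 0) := measurable_of_finite _
  have hI : ∫ x, (x - p) ^ k ∂μ = p * (1 - p)^k + (1 - p) * (-p)^k := by
    rw [hμ, ← PMF.toMeasure_map _ _ hmeas,
      integral_map hmeas.aemeasurable ((by fun_prop : Measurable fun x:ℝ => (x-p)^k).aestronglyMeasurable)]
    rw [PMF.integral_eq_sum]
    simp [PMF.bernoulli_apply, ENNReal.toReal_ofReal hp0.le,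
      ENNReal.toReal_sub_of_le (ENNReal.ofReal_le_one.mpr hp1.le) (by simp),
      ENNReal.toReal_ofReal hp0.le, Real.coe_toNNReal _ hp0.le,
      NNReal.coe_sub (Real.toNNReal_le_one.mpr hp1.le)]

  have hk2 : (2:ℕ) ≤ k := by omega
  have hexp : (-(1/2:ℝ)) * ((k - 2 : ℕ) : ℝ) + (k:ℝ)/2 = 1 := by
    rw [Nat.cast_sub hk2]; push_cast; ring
  have h2 : α ^ (k-2) * (p*(1-p))^((k:ℝ)/2) = p*(1-p) := by
    rw [hα, ← Real.rpow_natCast _ (k-2), ← Real.rpow_mul hpq.le,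
      ← Real.rpow_add hpq, hexp, Real.rpow_one]
  rw [hI, mul_assoc, h2]
  have hfact : (6:ℝ) ≤ k.factorial := by
    exact_mod_cast Nat.factorial_le hk
  have h3 : (1-p)^k ≤ 1-p := by
    calc (1-p)^k ≤ (1-p)^1 := pow_le_pow_of_le_one hq.le (by linarith) (by omega)
    _ = 1-p := pow_one _
  have h4 : p^k ≤ p := by
    calc p^k ≤ p^1 := pow_le_pow_of_le_one hp0.le hp1.le (by omega)
    _ = p := pow_one _
  have hb : |p*(1-p)^k + (1-p)*(-p)^k| ≤ 2*(p*(1-p)) := by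
    calc |p*(1-p)^k + (1-p)*(-p)^k| ≤ |p*(1-p)^k| + |(1-p)*(-p)^k| := abs_add_le _ _
    _ = p*(1-p)^k + (1-p)*p^k := by
        rw [abs_mul, abs_mul, abs_pow, abs_pow, abs_neg,
          abs_of_nonneg hp0.le, abs_of_nonneg hq.le]
    _ ≤ p*(1-p) + (1-p)*p := by
        gcongr
    _ = 2*(p*(1-p)) := by ring
  nlinarith [hpq, hb]
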